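/- For the Cauchy characteristic function φ(ω)=e^{−γω} with γ>0 and per-sensor power constraint, the deflection coefficient D_pspc(ω) = 2 e^{−2γω}(1−cos(ωθ))/(1−e^{−2γω}) satisfies lim_{ω→0⁺} D_pspc(ω) = 0. -/

import Mathlib

open Real Set

theorem stmt13 (γ θ : ℝ) (hγ : 0 < γ) (hθ : 0 < θ)
    (D : ℝ → ℝ)
    (hD : ∀ ω, D ω = 2 * Real.exp (-(2 * γ * ω)) * (1 - Real.cos (ω * θ)) /
        (1 - Real.exp (-(2 * γ * ω)))) :
    Filter.Tendsto D (nhdsWithin 0 (Ioi 0)) (nhds 0) := by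
  have key : ∀ ω ∈ Ioi (0:ℝ), 0 ≤ D ω ∧ D ω ≤ θ ^ 2 / (2 * γ) * ω := by
    intro ω hω
    have hω0 : 0 < ω := hω
    have hx : 0 < 2 * γ * ω := by positivity
    have hexp : Real.exp (-(2 * γ * ω)) < 1 := by
      rw [Real.exp_lt_one_iff]; linarith
    have hden : 0 < 1 - Real.exp (-(2 * γ * ω)) := by linarith
    have hcos : 0 ≤ 1 - Real.cos (ω * θ) := by
      have := Real.cos_le_one (ω * θ); linarith
    have hcos2 : 1 - Real.cos (ω * θ) ≤ (ω * θ) ^ 2 / 2 := by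
      have := Real.one_sub_sq_div_two_le_cos (x := ω * θ); linarith
    have hexp0 : 0 < Real.exp (-(2 * γ * ω)) := Real.exp_pos _
    have hlow : 2 * γ * ω * Real.exp (-(2 * γ * ω)) ≤ 1 - Real.exp (-(2 * γ * ω)) := by
      have h1 : 2 * γ * ω + 1 ≤ Real.exp (2 * γ * ω) := Real.add_one_le_exp _
      have h2 : (2 * γ * ω + 1) * Real.exp (-(2 * γ * ω)) ≤
          Real.exp (2 * γ * ω) * Real.exp (-(2 * γ * ω)) :=
        mul_le_mul_of_nonneg_right h1 hexp0.le
      rw [← Real.exp_add] at h2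
      simp at h2
      nlinarith
    rw [hD ω]
    constructor
    · positivity
    · rw [div_le_iff₀ hden]
      have hnum : 2 * Real.exp (-(2 * γ * ω)) * (1 - Real.cos (ω * θ)) ≤
          2 * Real.exp (-(2 * γ * ω)) * ((ω * θ) ^ 2 / 2) := by
        apply mul_le_mul_of_nonneg_left hcos2; positivity
      have h3 : θ ^ 2 / (2 * γ) * ω * (2 * γ * ω * Real.exp (-(2 * γ * ω))) ≤
          θ ^ 2 / (2 * γ) * ω * (1 - Real.exp (-(2 * γ * ω))) := by
        apply mul_le_mul_of_nonneg_left hlow; positivity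
      have heq : θ ^ 2 / (2 * γ) * ω * (2 * γ * ω * Real.exp (-(2 * γ * ω))) =
          2 * Real.exp (-(2 * γ * ω)) * ((ω * θ) ^ 2 / 2) := by
        field_simp
      linarith
  have hg : Filter.Tendsto (fun ω => θ ^ 2 / (2 * γ) * ω) (nhdsWithin 0 (Ioi 0)) (nhds 0) := by
    have h0 : Filter.Tendsto (fun ω : ℝ => θ ^ 2 / (2 * γ) * ω) (nhds 0) (nhds 0) := by
      simpa using ((continuous_mul_left (θ ^ 2 / (2 * γ))).tendsto (0:ℝ) : Filter.Tendsto (fun ω : ℝ => θ ^ 2 / (2 * γ) * ω) _ _)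
    exact h0.mono_left nhdsWithin_le_nhds
  refine squeeze_zero' ?_ ?_ hg
  · filter_upwards [self_mem_nhdsWithin] with ω hω using (key ω hω).1
  · filter_upwards [self_mem_nhdsWithin] with ω hω using (key ω hω).2
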